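/- arXiv:2011.14622 — 2 statements merged into one kernel-verified Lean document; each statement's English description precedes it below -/
import Mathlib

section
/- Let Φ_1, …, Φ_n be unit vectors in ℂ^{d₁} and Ψ_1, …, Ψ_n be unit vectors in ℂ^{d₄} (neither family need be orthogonal), and let ν_1, …, ν_n > 0 with Σ_j ν_j² = 1. Let ρ₁₄ = Σ_j ν_j² (Φ_j Φ_j*) ⊗ (Ψ_j Ψ_j*) be the corresponding separable density matrix on ℂ^{d₁} ⊗ ℂ^{d₄}. Then there exist natural numbers d₂, d₃ and a unit vector Ω in ℂ^{d₁} ⊗ ℂ^{d₂} ⊗ ℂ^{d₃} ⊗ ℂ^{d₄} such that the reduced density matrix of |Ω⟩⟨Ω| on the factors (1,4) equals ρ₁₄ and the reduced density matrix ρ₁₂ on the factors (1,2) satisfies S(ρ₁₂) ≤ −4 Σ_j ν_j² log ν_j (natural logarithm). -/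
open scoped BigOperators

/-- Von Neumann entropy of a (Hermitian) matrix: `-∑ λᵢ log λᵢ` over the eigenvalues,
with the convention that it is `0` for non-Hermitian matrices. -/
noncomputable def vNEntropy {n : Type*} [Fintype n] [DecidableEq n] (ρ : Matrix n n ℂ) : ℝ :=
  if h : ρ.IsHermitian then -∑ i, h.eigenvalues i * Real.log (h.eigenvalues i) else 0


open Polynomial Matrix

lemma charmatrix_diagonal' {m R : Type*} [Fintype m] [DecidableEq m] [CommRing R] (v : m → R) :
    charmatrix (Matrix.diagonal v) = Matrix.diagonal (fun i => X - C (v i)) := by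
  ext i j
  by_cases h : i = j
  · subst h; simp [charmatrix_apply, Matrix.diagonal_apply]
  · simp [charmatrix_apply, Matrix.diagonal_apply, h]

lemma charpoly_diagonal' {m R : Type*} [Fintype m] [DecidableEq m] [CommRing R] (v : m → R) :
    (Matrix.diagonal v).charpoly = ∏ i, (X - C (v i)) := by
  rw [Matrix.charpoly, charmatrix_diagonal', Matrix.det_diagonal]

lemma charpoly_conj_unitary {m : Type*} [Fintype m] [DecidableEq m]
    (W : Matrix m m ℂ) (hW : W * Wᴴ = 1) (A : Matrix m m ℂ) :
    (W * A * Wᴴ).charpoly = A.charpoly := by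
  have hmul : W.map C * Wᴴ.map C = 1 := by
    rw [← Matrix.map_mul, hW, Matrix.map_one _ (map_zero C) (map_one C)]
  have hc : ∀ B : Matrix m m ℂ, B.map C * Matrix.scalar m (X : ℂ[X]) =
      Matrix.scalar m (X : ℂ[X]) * B.map C :=
    fun B => ((Matrix.scalar_commute (X : ℂ[X]) (fun r => Commute.all _ _) (B.map C))).symm
  have key : charmatrix (W * A * Wᴴ) = W.map C * charmatrix A * Wᴴ.map C := by
    unfold charmatrix
    simp only [RingHom.mapMatrix_apply]
    rw [Matrix.mul_sub, Matrix.sub_mul, hc W, Matrix.mul_assoc (Matrix.scalar m X),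
      hmul, Matrix.mul_one, ← Matrix.map_mul, ← Matrix.map_mul]
  rw [Matrix.charpoly, key, Matrix.det_mul, Matrix.det_mul, mul_comm, ← mul_assoc, ← Matrix.det_mul, mul_eq_one_comm.mp hmul]
  simp [Matrix.charpoly]

lemma sum_g_eigenvalues_eq {m : Type*} [Fintype m] [DecidableEq m]
    (W : Matrix m m ℂ) (hW : W * Wᴴ = 1) (dvec : m → ℝ)
    {A : Matrix m m ℂ} (hAdef : A = W * Matrix.diagonal (fun i => ((dvec i : ℝ) : ℂ)) * Wᴴ)
    (hA : A.IsHermitian) (g : ℝ → ℝ) :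
    ∑ i, g (hA.eigenvalues i) = ∑ i, g (dvec i) := by
  have hU : (hA.eigenvectorUnitary : Matrix m m ℂ) * (hA.eigenvectorUnitary : Matrix m m ℂ)ᴴ = 1 := by
    rw [← Matrix.star_eq_conjTranspose]
    exact (Matrix.mem_unitaryGroup_iff).mp hA.eigenvectorUnitary.2
  have h2 : A.charpoly = ∏ i, (X - C ((hA.eigenvalues i : ℂ))) := by
    conv_lhs => rw [hA.spectral_theorem]
    rw [Unitary.conjStarAlgAut_apply, Matrix.star_eq_conjTranspose, charpoly_conj_unitary _ hU, charpoly_diagonal']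
    rfl
  have h1 : A.charpoly = ∏ i, (X - C ((dvec i : ℂ))) := by
    rw [hAdef, charpoly_conj_unitary _ hW, charpoly_diagonal']
  have hprod : ((Finset.univ.val.map (fun i => ((hA.eigenvalues i : ℂ)))).map (fun a => X - C a)).prod
      = ((Finset.univ.val.map (fun i => ((dvec i : ℂ)))).map (fun a => X - C a)).prod := by
    rw [Multiset.map_map, Multiset.map_map]
    rw [← Finset.prod_eq_multiset_prod, ← Finset.prod_eq_multiset_prod]
    exact h2 ▸ h1 ▸ rfl
  have hms : (Finset.univ.val.map (fun i => ((hA.eigenvalues i : ℂ))))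
      = Finset.univ.val.map (fun i => ((dvec i : ℂ))) := by
    have := congrArg Polynomial.roots hprod
    rwa [Polynomial.roots_multiset_prod_X_sub_C, Polynomial.roots_multiset_prod_X_sub_C] at this
  have hsum := congrArg (fun s : Multiset ℂ => ((s.map (fun z : ℂ => g z.re)).sum)) hms
  simp only [Multiset.map_map, Function.comp] at hsum
  rw [Finset.sum_eq_multiset_sum, Finset.sum_eq_multiset_sum]
  convert hsum using 2
  all_goals simp only [Complex.ofReal_re]

lemma sum_ite_const' {β M : Type*} [Fintype β] [AddCommMonoid M] {c : Prop} [Decidable c]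
    (x : β → M) : ∑ k, (if c then x k else 0) = if c then ∑ k, x k else 0 := by
  split_ifs <;> simp

/-- Given unit vectors `Φ j ∈ ℂ^{d₁}`, `Ψ j ∈ ℂ^{d₄}` and weights `ν j > 0`
with `∑ νⱼ² = 1`, there are `d₂ d₃` and a unit vector `Ω ∈ ℂ^{d₁}⊗ℂ^{d₂}⊗ℂ^{d₃}⊗ℂ^{d₄}`
whose reduced density matrix on the factors (1,4) is the separable state
`∑ νⱼ² |Φⱼ⟩⟨Φⱼ| ⊗ |Ψⱼ⟩⟨Ψⱼ|`, and whose reduced density matrix on the factors (1,2)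
has entropy at most `-4 ∑ νⱼ² log νⱼ`. -/
theorem separable_state_purification_entropy_bound
    {d₁ d₄ n : ℕ} (Φ : Fin n → Fin d₁ → ℂ) (Ψ : Fin n → Fin d₄ → ℂ)
    (hΦ : ∀ j, ∑ i, ‖Φ j i‖ ^ 2 = 1) (hΨ : ∀ j, ∑ k, ‖Ψ j k‖ ^ 2 = 1)
    (ν : Fin n → ℝ) (hν : ∀ j, 0 < ν j) (hνsum : ∑ j, ν j ^ 2 = 1) :
    ∃ (d₂ d₃ : ℕ) (Ω : Fin d₁ × Fin d₂ × Fin d₃ × Fin d₄ → ℂ),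
      (∑ p, ‖Ω p‖ ^ 2 = 1) ∧
      (∀ i i' k k',
        (∑ a : Fin d₂, ∑ b : Fin d₃, Ω (i, a, b, k) * star (Ω (i', a, b, k'))) =
          ∑ j, ((ν j : ℂ) ^ 2) * (Φ j i * star (Φ j i')) * (Ψ j k * star (Ψ j k'))) ∧
      vNEntropy (Matrix.of fun (p q : Fin d₁ × Fin d₂) =>
          ∑ b : Fin d₃, ∑ k : Fin d₄, Ω (p.1, p.2, b, k) * star (Ω (q.1, q.2, b, k))) ≤
        -4 * ∑ j, ν j ^ 2 * Real.log (ν j) := by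
  -- degenerate cases
  rcases Nat.eq_zero_or_pos n with hn | hn
  · exfalso; subst hn; simp at hνsum
  have j0 : Fin n := ⟨0, hn⟩
  rcases Nat.eq_zero_or_pos d₁ with h1 | h1
  · exfalso; have := hΦ j0; subst h1; simp at this
  rcases Nat.eq_zero_or_pos d₄ with h4 | h4
  · exfalso; have := hΨ j0; subst h4; simp at this
  -- the purification
  set Ω : Fin d₁ × Fin n × Fin n × Fin d₄ → ℂ :=
    fun p => if p.2.1 = p.2.2.1 then (ν p.2.1 : ℂ) * Φ p.2.1 p.1 * Ψ p.2.1 p.2.2.2 else 0 with hΩ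
  have hνnorm : ∀ j : Fin n, ‖((ν j : ℂ))‖ ^ 2 = ν j ^ 2 := by
    intro j; rw [Complex.norm_real, Real.norm_eq_abs, sq_abs]
  have hΩsq : ∀ (i : Fin d₁) (a b : Fin n) (k : Fin d₄), ‖Ω (i, a, b, k)‖ ^ 2 =
      if a = b then ν a ^ 2 * ‖Φ a i‖ ^ 2 * ‖Ψ a k‖ ^ 2 else 0 := by
    intro i a b k
    simp only [hΩ]
    split_ifs with h
    · rw [norm_mul, norm_mul, mul_pow, mul_pow, hνnorm]
    · simp
  refine ⟨n, n, Ω, ?_, ?_, ?_⟩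
  · calc ∑ p, ‖Ω p‖ ^ 2
        = ∑ i, ∑ a, ∑ b, ∑ k, ‖Ω (i, a, b, k)‖ ^ 2 := by
          simp only [Fintype.sum_prod_type]
      _ = ∑ i, ∑ a, ∑ k, ν a ^ 2 * ‖Φ a i‖ ^ 2 * ‖Ψ a k‖ ^ 2 := by
          simp only [hΩsq, sum_ite_const', Finset.sum_ite_eq, Finset.mem_univ, if_true]
      _ = ∑ a, ν a ^ 2 * (∑ i, ‖Φ a i‖ ^ 2) * (∑ k, ‖Ψ a k‖ ^ 2) := by
          rw [Finset.sum_comm]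
          refine Finset.sum_congr rfl fun a _ => ?_
          simp only [Finset.sum_mul, Finset.mul_sum, mul_assoc]
          rw [Finset.sum_comm]
      _ = 1 := by simp only [hΦ, hΨ, mul_one]; exact hνsum
  · intro i i' k k'
    have hterm : ∀ a b : Fin n, Ω (i, a, b, k) * star (Ω (i', a, b, k')) =
        if a = b then (ν a : ℂ) ^ 2 * (Φ a i * star (Φ a i')) * (Ψ a k * star (Ψ a k')) else 0 := by
      intro a b
      simp only [hΩ]
      split_ifs with h
      · simp only [star_mul', Complex.star_def, Complex.conj_ofReal]
        ring
      · simp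
    simp only [hterm, Finset.sum_ite_eq, Finset.mem_univ, if_true]
  · -- entropy bound
    set M : Matrix (Fin d₁ × Fin n) (Fin d₁ × Fin n) ℂ := Matrix.of fun p q =>
      ∑ b : Fin n, ∑ k : Fin d₄, Ω (p.1, p.2, b, k) * star (Ω (q.1, q.2, b, k)) with hMdef
    have hΨc : ∀ j : Fin n, ∑ k, Ψ j k * star (Ψ j k) = (1 : ℂ) := by
      intro j
      have hk : ∀ k, Ψ j k * star (Ψ j k) = ((‖Ψ j k‖ ^ 2 : ℝ) : ℂ) := by
        intro k
        rw [Complex.star_def, Complex.mul_conj]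
        norm_cast
        rw [← Complex.sq_norm]
      rw [Finset.sum_congr rfl fun k _ => hk k, ← Complex.ofReal_sum, hΨ j, Complex.ofReal_one]
    have hMapply : ∀ (i i' : Fin d₁) (a a' : Fin n), M (i, a) (i', a') =
        if a = a' then (ν a : ℂ) ^ 2 * (Φ a i * star (Φ a i')) else 0 := by
      intro i i' a a'
      have step1 : M (i, a) (i', a') = ∑ b, ∑ k, (if a = b ∧ a' = b then
          ((ν a : ℂ) ^ 2 * (Φ a i * star (Φ a i'))) * (Ψ a k * star (Ψ a k)) else 0) := by
        rw [hMdef]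
        simp only [Matrix.of_apply]
        refine Finset.sum_congr rfl fun b _ => Finset.sum_congr rfl fun k _ => ?_
        by_cases hab : a = b
        · by_cases hab' : a' = b
          · subst hab; have : a' = a := hab'; subst this
            simp only [hΩ, if_pos rfl, and_self, if_true]
            simp only [star_mul', Complex.star_def, Complex.conj_ofReal]
            ring
          · simp [hΩ, hab, hab']
        · simp [hΩ, hab]
      rw [step1]
      have step2 : ∀ b, (∑ k, if a = b ∧ a' = b then
          ((ν a : ℂ) ^ 2 * (Φ a i * star (Φ a i'))) * (Ψ a k * star (Ψ a k)) else 0)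
          = if a' = a then (if a = b then (ν a : ℂ) ^ 2 * (Φ a i * star (Φ a i')) else 0) else 0 := by
        intro b
        by_cases hab : a = b
        · subst hab
          by_cases h2 : a' = a
          · subst h2
            simp only [and_self, eq_self_iff_true, if_true, ite_true]
            rw [← Finset.mul_sum, hΨc a', mul_one]
          · have hc : ¬(a = a ∧ a' = a) := fun hc => h2 hc.2
            simp [hc, h2]
        · have hc : ¬(a = b ∧ a' = b) := fun hc => hab hc.1
          simp [hc, hab]
      rw [Finset.sum_congr rfl fun b _ => step2 b, sum_ite_const', Finset.sum_ite_eq]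
      by_cases h : a' = a
      · subst h; simp
      · simp [h, Ne.symm h]
    -- orthonormal bases extending each Φ j
    have i0 : Fin d₁ := ⟨0, h1⟩
    have hBs : ∀ j : Fin n, ∃ b : OrthonormalBasis (Fin d₁) ℂ (EuclideanSpace ℂ (Fin d₁)),
        b i0 = (WithLp.equiv 2 (Fin d₁ → ℂ)).symm (Φ j) := by
      intro j
      set φ : EuclideanSpace ℂ (Fin d₁) := (WithLp.equiv 2 (Fin d₁ → ℂ)).symm (Φ j) with hφ
      have hnorm1 : ‖φ‖ = 1 := by
        rw [EuclideanSpace.norm_eq]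
        have : ∀ i, φ i = Φ j i := fun i => rfl
        simp only [this]
        rw [hΦ j, Real.sqrt_one]
      have horth : Orthonormal ℂ (Set.restrict {i0} (fun _ : Fin d₁ => φ)) := by
        refine ⟨fun _ => hnorm1, fun p q hne => ?_⟩
        exfalso
        exact hne (Subtype.ext (p.2.trans q.2.symm))
      obtain ⟨b, hb⟩ := horth.exists_orthonormalBasis_extension_of_card_eq (by simp)
      exact ⟨b, hb i0 rfl⟩
    choose B hB using hBs
    -- the unitary W
    set W : Matrix (Fin d₁ × Fin n) (Fin d₁ × Fin n) ℂ :=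
      Matrix.of fun p q => if p.2 = q.2 then (B q.2 q.1 : EuclideanSpace ℂ (Fin d₁)) p.1 else 0
      with hWdef
    have hWstar : Wᴴ * W = 1 := by
      ext p q
      obtain ⟨m, a⟩ := p; obtain ⟨m', a'⟩ := q
      rw [Matrix.mul_apply]
      simp only [Matrix.conjTranspose_apply, hWdef, Matrix.of_apply]
      rw [Fintype.sum_prod_type]
      by_cases haa : a = a'
      · subst haa
        have hiter : ∀ (i : Fin d₁) (c : Fin n),
            star (if c = a then (B a m : EuclideanSpace ℂ (Fin d₁)) i else 0) *
              (if c = a then (B a m' : EuclideanSpace ℂ (Fin d₁)) i else 0) =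
            if c = a then star ((B a m : EuclideanSpace ℂ (Fin d₁)) i) *
              (B a m' : EuclideanSpace ℂ (Fin d₁)) i else 0 := by
          intro i c; split_ifs <;> simp
        simp only [hiter]
        rw [Finset.sum_comm]
        simp only [sum_ite_const', Finset.sum_ite_eq, Finset.mem_univ, if_true]
        have hinner := orthonormal_iff_ite.mp (B a).orthonormal m m'
        rw [PiLp.inner_apply] at hinner
        simp only [RCLike.inner_apply, starRingEnd_apply] at hinner
        rw [Finset.sum_congr rfl fun k _ => mul_comm (star ((B a m : EuclideanSpace ℂ (Fin d₁)) k)) ((B a m' : EuclideanSpace ℂ (Fin d₁)) k), hinner]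
        simp [Matrix.one_apply, Prod.ext_iff]
      · have hz : ∀ (i : Fin d₁) (c : Fin n),
            star (if c = a then (B a m : EuclideanSpace ℂ (Fin d₁)) i else 0) *
              (if c = a' then (B a' m' : EuclideanSpace ℂ (Fin d₁)) i else 0) = 0 := by
          intro i c
          by_cases h1 : c = a
          · by_cases h2 : c = a'
            · exact absurd (h1.symm.trans h2) haa
            · simp [h2]
          · simp [h1]
        simp only [hz]
        simp [Matrix.one_apply, Prod.ext_iff, haa]
    have hWunit : W * Wᴴ = 1 := mul_eq_one_comm.mp hWstar
    -- diagonal weights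
    set dv : Fin d₁ × Fin n → ℝ := fun p => if p.1 = i0 then ν p.2 ^ 2 else 0 with hdv
    set dC : Fin d₁ × Fin n → ℂ := fun p => ((dv p : ℝ) : ℂ) with hdC
    have hMW : M = W * Matrix.diagonal dC * Wᴴ := by
      ext p q
      obtain ⟨i, a⟩ := p; obtain ⟨i', a'⟩ := q
      rw [hMapply]
      have hr : (W * Matrix.diagonal dC * Wᴴ) (i, a) (i', a')
          = ∑ r, W (i, a) r * dC r * star (W (i', a') r) := by
        rw [Matrix.mul_apply]
        refine Finset.sum_congr rfl fun r _ => ?_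
        rw [Matrix.mul_diagonal, Matrix.conjTranspose_apply]
      rw [hr, Fintype.sum_prod_type]
      have hpt : ∀ (m : Fin d₁) (c : Fin n),
          W (i, a) (m, c) * dC (m, c) * star (W (i', a') (m, c)) =
          if a' = a then (if c = a then dC (m, a) *
            ((B a m : EuclideanSpace ℂ (Fin d₁)) i *
              star ((B a m : EuclideanSpace ℂ (Fin d₁)) i')) else 0) else 0 := by
        intro m c
        simp only [hWdef, Matrix.of_apply]
        by_cases h1 : a = c
        · by_cases h2 : a' = c
          · subst h1; subst h2
            simp only [if_pos rfl, ite_true, eq_self_iff_true]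
            ring
          · simp [h1, h2, fun hh : a' = a => h2 (hh.trans h1)]
        · by_cases h2 : a' = a
          · subst h2
            simp only [if_neg h1, zero_mul, mul_zero, star_zero]
            rw [if_pos trivial, if_neg (fun hh : c = a' => h1 hh.symm)]
          · simp [h1, h2]
      simp only [hpt, sum_ite_const', Finset.sum_ite_eq', Finset.mem_univ, if_true]
      have hcol : ∀ m : Fin d₁, dC (m, a) *
          ((B a m : EuclideanSpace ℂ (Fin d₁)) i * star ((B a m : EuclideanSpace ℂ (Fin d₁)) i'))
          = if m = i0 then ((ν a : ℂ) ^ 2) *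
            ((B a m : EuclideanSpace ℂ (Fin d₁)) i * star ((B a m : EuclideanSpace ℂ (Fin d₁)) i'))
            else 0 := by
        intro m
        simp only [hdC, hdv]
        split_ifs with h
        · push_cast; ring
        · simp
      rw [Finset.sum_congr rfl fun m _ => hcol m]
      simp only [Finset.sum_ite_eq', Finset.mem_univ, ite_true]
      rw [hB a]
      by_cases h : a' = a
      · subst h; simp only [if_pos rfl]; rfl
      · simp [h, Ne.symm h]
    -- Hermitian
    have hD : (Matrix.diagonal dC)ᴴ = Matrix.diagonal dC := by
      rw [Matrix.diagonal_conjTranspose]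
      have hstar : star dC = dC := by
        funext p
        simp [hdC, Pi.star_apply, Complex.star_def, Complex.conj_ofReal]
      rw [hstar]
    have hHerm : M.IsHermitian := by
      show Mᴴ = M
      rw [hMW, Matrix.conjTranspose_mul, Matrix.conjTranspose_mul,
        Matrix.conjTranspose_conjTranspose, hD, Matrix.mul_assoc]
    -- entropy computation
    show vNEntropy M ≤ _
    rw [vNEntropy, dif_pos hHerm]
    have hsum := sum_g_eigenvalues_eq W hWunit dv hMW hHerm (fun x => x * Real.log x)
    rw [hsum]
    have hdvsum : ∑ p : Fin d₁ × Fin n, dv p * Real.log (dv p)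
        = ∑ a, ν a ^ 2 * Real.log (ν a ^ 2) := by
      rw [Fintype.sum_prod_type]
      have hpt2 : ∀ (m : Fin d₁) (a : Fin n), dv (m, a) * Real.log (dv (m, a))
          = if m = i0 then ν a ^ 2 * Real.log (ν a ^ 2) else 0 := by
        intro m a
        simp only [hdv]
        split_ifs with h <;> simp
      simp only [hpt2, sum_ite_const', Finset.sum_ite_eq', Finset.mem_univ, ite_true]
    rw [hdvsum]
    have hlog2 : ∑ a, ν a ^ 2 * Real.log (ν a ^ 2) = 2 * ∑ a, ν a ^ 2 * Real.log (ν a) := by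
      rw [Finset.mul_sum]
      refine Finset.sum_congr rfl fun a _ => ?_
      rw [Real.log_pow]
      push_cast
      ring
    rw [hlog2]
    have hS : ∑ a, ν a ^ 2 * Real.log (ν a) ≤ 0 := by
      refine Finset.sum_nonpos fun j _ => ?_
      have hsq : ν j ^ 2 ≤ 1 := by
        rw [← hνsum]
        exact Finset.single_le_sum (fun i _ => sq_nonneg (ν i)) (Finset.mem_univ j)
      have hle1 : ν j ≤ 1 := by nlinarith [hν j]
      have hlognp : Real.log (ν j) ≤ 0 := Real.log_nonpos (le_of_lt (hν j)) hle1
      exact mul_nonpos_iff.mpr (Or.inl ⟨sq_nonneg _, hlognp⟩)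
    linarith
end

section
/- Let G be an n×n positive semidefinite Hermitian complex matrix with unit diagonal, G_{ii} = 1 for all i, and let N be the real diagonal n×n matrix with nonnegative diagonal entries ν_1, …, ν_n satisfying Σ_i ν_i² = 1. Then N G N is a density matrix and S(N G N) ≤ S(N²) = −Σ_i ν_i² log ν_i². -/
open scoped BigOperators ComplexOrder

/-- A density matrix: positive semidefinite with trace 1. -/
def IsDensityMatrix {n : Type*} [Fintype n] [DecidableEq n] (ρ : Matrix n n ℂ) : Prop :=
  ρ.PosSemidef ∧ ρ.trace = 1

open Matrix

/-- Jensen step for doubly stochastic weights. -/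
lemma aux_jensen_ds {n : ℕ} (B : Fin n → Fin n → ℝ) (x : Fin n → ℝ)
    (hB : ∀ i j, 0 ≤ B i j) (hrow : ∀ i, ∑ j, B i j = 1) (hcol : ∀ j, ∑ i, B i j = 1)
    (hx : ∀ j, 0 ≤ x j) :
    ∑ j, Real.negMulLog (x j) ≤ ∑ i, Real.negMulLog (∑ j, B i j * x j) := by
  have key : ∀ i, ∑ j, B i j * Real.negMulLog (x j) ≤ Real.negMulLog (∑ j, B i j * x j) := by
    intro i
    have := Real.concaveOn_negMulLog.le_map_sum (t := Finset.univ) (w := B i) (p := x)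
      (fun j _ => hB i j) (hrow i) (fun j _ => hx j)
    simpa [smul_eq_mul] using this
  calc ∑ j, Real.negMulLog (x j) = ∑ j, (∑ i, B i j) * Real.negMulLog (x j) := by
        simp [hcol]
    _ = ∑ i, ∑ j, B i j * Real.negMulLog (x j) := by
        rw [Finset.sum_comm]; simp [Finset.sum_mul]
    _ ≤ ∑ i, Real.negMulLog (∑ j, B i j * x j) := Finset.sum_le_sum fun i _ => key i

section
variable {n : ℕ} {ρ : Matrix (Fin n) (Fin n) ℂ} (h : ρ.IsHermitian)

noncomputable def auxB (h : ρ.IsHermitian) : Fin n → Fin n → ℝ :=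
  fun i j => Complex.normSq ((h.eigenvectorUnitary : Matrix (Fin n) (Fin n) ℂ) i j)

lemma auxB_nonneg (i j : Fin n) : 0 ≤ auxB h i j := Complex.normSq_nonneg _

lemma auxB_row (i : Fin n) : ∑ j, auxB h i j = 1 := by
  have h1 : ((h.eigenvectorUnitary : Matrix (Fin n) (Fin n) ℂ) *
      star (h.eigenvectorUnitary : Matrix (Fin n) (Fin n) ℂ)) = 1 :=
    Matrix.mem_unitaryGroup_iff.mp h.eigenvectorUnitary.2
  have := congrFun (congrFun h1 i) i
  rw [Matrix.mul_apply] at this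
  simp only [Matrix.one_apply_eq] at this
  have : (((∑ j, auxB h i j : ℝ)) : ℂ) = 1 := by
    rw [← this]
    push_cast
    refine Finset.sum_congr rfl fun j _ => ?_
    simp [auxB, Matrix.star_apply, Complex.mul_conj]
  exact_mod_cast this

lemma auxB_col (j : Fin n) : ∑ i, auxB h i j = 1 := by
  have h1 : (star (h.eigenvectorUnitary : Matrix (Fin n) (Fin n) ℂ) *
      (h.eigenvectorUnitary : Matrix (Fin n) (Fin n) ℂ)) = 1 :=
    Matrix.mem_unitaryGroup_iff'.mp h.eigenvectorUnitary.2
  have := congrFun (congrFun h1 j) j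
  rw [Matrix.mul_apply] at this
  simp only [Matrix.one_apply_eq] at this
  have : (((∑ i, auxB h i j : ℝ)) : ℂ) = 1 := by
    rw [← this]
    push_cast
    refine Finset.sum_congr rfl fun i _ => ?_
    simp [auxB, Matrix.star_apply, mul_comm, Complex.mul_conj]
  exact_mod_cast this

lemma aux_diag_eq (i : Fin n) : ρ i i = ((∑ j, auxB h i j * h.eigenvalues j : ℝ) : ℂ) := by
  conv_lhs => rw [h.spectral_theorem, Unitary.conjStarAlgAut_apply]
  rw [Matrix.mul_apply]
  push_cast
  refine Finset.sum_congr rfl fun j _ => ?_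
  rw [Matrix.mul_apply, Finset.sum_mul]
  rw [Finset.sum_eq_single j]
  · simp only [Matrix.diagonal_apply_eq, Matrix.star_apply, auxB, Function.comp_apply,
      IsHermitian.eigenvectorUnitary_apply]
    rw [mul_comm _ ((_ : ℂ)), ← mul_assoc]
    rw [show (star ((h.eigenvectorBasis j).ofLp i) *
      (h.eigenvectorBasis j).ofLp i : ℂ) =
      (Complex.normSq ((h.eigenvectorBasis j).ofLp i) : ℂ) from by
        rw [mul_comm]; exact Complex.mul_conj _]
    norm_num
  · intro k _ hk; simp [Matrix.diagonal_apply_ne _ hk]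
  · simp

end

section
variable {n : ℕ}

lemma aux_eig_diag (d : Fin n → ℝ)
    (h : (Matrix.diagonal (fun i => (d i : ℂ))).IsHermitian) (j : Fin n) :
    h.eigenvalues j = ∑ i, auxB h i j * d i := by
  have h1 := h.conjStarAlgAut_star_eigenvectorUnitary
  rw [Unitary.conjStarAlgAut_star_apply] at h1
  have h2 := congrFun (congrFun h1 j) j
  rw [Matrix.diagonal_apply_eq, Matrix.mul_apply] at h2
  have h3 : ((∑ i, auxB h i j * d i : ℝ) : ℂ) = ((h.eigenvalues j : ℝ) : ℂ) := by
    rw [show (((h.eigenvalues j : ℝ)) : ℂ) = (RCLike.ofReal ∘ h.eigenvalues) j from rfl, ← h2]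
    push_cast
    refine Finset.sum_congr rfl fun i _ => ?_
    rw [Matrix.mul_apply, Finset.sum_eq_single i]
    · simp only [Matrix.star_apply, Matrix.diagonal_apply_eq, auxB,
        IsHermitian.eigenvectorUnitary_apply]
      have hz : ∀ z w : ℂ, star z * w * z = (Complex.normSq z : ℂ) * w := by
        intro z w
        rw [mul_right_comm, show (star z * z : ℂ) = (Complex.normSq z : ℂ) from by
          rw [mul_comm]; exact Complex.mul_conj _]
      rw [hz]
    · intro k _ hk; simp [Matrix.diagonal_apply_ne _ hk]
    · simp
  exact_mod_cast h3.symm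

lemma aux_entropy_le {ρ : Matrix (Fin n) (Fin n) ℂ} (hρ : ρ.PosSemidef)
    (d : Fin n → ℝ) (hd : ∀ i, ρ i i = (d i : ℂ)) :
    ∑ j, Real.negMulLog (hρ.1.eigenvalues j) ≤ ∑ i, Real.negMulLog (d i) := by
  have hdiag : ∀ i, d i = ∑ j, auxB hρ.1 i j * hρ.1.eigenvalues j := by
    intro i
    have := (hd i).symm.trans (aux_diag_eq hρ.1 i)
    exact_mod_cast this
  calc ∑ j, Real.negMulLog (hρ.1.eigenvalues j)
      ≤ ∑ i, Real.negMulLog (∑ j, auxB hρ.1 i j * hρ.1.eigenvalues j) :=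
        aux_jensen_ds _ _ (auxB_nonneg hρ.1) (auxB_row hρ.1) (auxB_col hρ.1)
          (fun j => hρ.eigenvalues_nonneg j)
    _ = ∑ i, Real.negMulLog (d i) := by
        exact Finset.sum_congr rfl fun i _ => by rw [← hdiag i]

lemma aux_entropy_diag (d : Fin n → ℝ) (hd : ∀ i, 0 ≤ d i)
    (h : (Matrix.diagonal (fun i => (d i : ℂ))).IsHermitian) :
    ∑ j, Real.negMulLog (h.eigenvalues j) = ∑ i, Real.negMulLog (d i) := by
  have hPSD : (Matrix.diagonal (fun i => (d i : ℂ))).PosSemidef :=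
    Matrix.posSemidef_diagonal_iff.mpr fun i => by
      exact_mod_cast Complex.zero_le_real.mpr (hd i)
  refine le_antisymm ?_ ?_
  · exact aux_entropy_le hPSD d fun i => by simp
  · calc ∑ i, Real.negMulLog (d i)
        ≤ ∑ j, Real.negMulLog (∑ i, (fun j i => auxB h i j) j i * d i) :=
          aux_jensen_ds (fun j i => auxB h i j) d (fun j i => auxB_nonneg h i j)
            (fun j => auxB_col h j) (fun i => auxB_row h i) hd
      _ = ∑ j, Real.negMulLog (h.eigenvalues j) := by
          exact Finset.sum_congr rfl fun j _ => by rw [← aux_eig_diag d h j]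

lemma vNEntropy_eq {ρ : Matrix (Fin n) (Fin n) ℂ} (h : ρ.IsHermitian) :
    vNEntropy ρ = ∑ j, Real.negMulLog (h.eigenvalues j) := by
  rw [vNEntropy, dif_pos h, ← Finset.sum_neg_distrib]
  exact Finset.sum_congr rfl fun j _ => by rw [Real.negMulLog]; ring

end

/-- If `G` is positive semidefinite with unit diagonal and
`N = diag(ν₁,…,νₙ)` with `νᵢ ≥ 0`, `∑ νᵢ² = 1`, then `N G N` is a density matrix and
`S(N G N) ≤ S(N²) = −∑ νᵢ² log νᵢ²`. -/
theorem entropy_NGN_le_entropy_N_sq {n : ℕ}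
    (G : Matrix (Fin n) (Fin n) ℂ) (hG : G.PosSemidef) (hGdiag : ∀ i, G i i = 1)
    (ν : Fin n → ℝ) (hν : ∀ i, 0 ≤ ν i) (hνsum : ∑ i, ν i ^ 2 = 1) :
    IsDensityMatrix
        (Matrix.diagonal (fun i => (ν i : ℂ)) * G * Matrix.diagonal (fun i => (ν i : ℂ))) ∧
      vNEntropy
          (Matrix.diagonal (fun i => (ν i : ℂ)) * G * Matrix.diagonal (fun i => (ν i : ℂ))) ≤
        vNEntropy
          (Matrix.diagonal (fun i => (ν i : ℂ)) * Matrix.diagonal (fun i => (ν i : ℂ))) ∧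
      vNEntropy
          (Matrix.diagonal (fun i => (ν i : ℂ)) * Matrix.diagonal (fun i => (ν i : ℂ))) =
        -∑ i, ν i ^ 2 * Real.log (ν i ^ 2) := by
  set N : Matrix (Fin n) (Fin n) ℂ := Matrix.diagonal (fun i => (ν i : ℂ)) with hNdef
  have hNH : Nᴴ = N := by
    rw [hNdef, Matrix.diagonal_conjTranspose,
      show (star fun i => ((ν i : ℂ))) = fun i => ((ν i : ℂ)) from
        funext fun i => Complex.conj_ofReal (ν i)]
  have hPSD : (N * G * N).PosSemidef := by
    have := hG.mul_mul_conjTranspose_same N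
    rwa [hNH] at this
  have hdiagρ : ∀ i, (N * G * N) i i = ((ν i ^ 2 : ℝ) : ℂ) := by
    intro i
    rw [Matrix.mul_diagonal, Matrix.diagonal_mul, hGdiag i]
    push_cast
    ring
  have htrace : (N * G * N).trace = 1 := by
    simp only [Matrix.trace, Matrix.diag]
    calc ∑ i, (N * G * N) i i = ∑ i, ((ν i ^ 2 : ℝ) : ℂ) :=
          Finset.sum_congr rfl fun i _ => hdiagρ i
      _ = ((∑ i, ν i ^ 2 : ℝ) : ℂ) := by push_cast; ring
      _ = 1 := by rw [hνsum]; norm_num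
  have hNN : N * N = Matrix.diagonal (fun i => ((ν i ^ 2 : ℝ) : ℂ)) := by
    rw [hNdef, Matrix.diagonal_mul_diagonal]
    congr 1
    funext i
    push_cast
    ring
  have hNNherm : (Matrix.diagonal (fun i => ((ν i ^ 2 : ℝ) : ℂ))).IsHermitian :=
    (Matrix.posSemidef_diagonal_iff.mpr fun i => by
      exact_mod_cast Complex.zero_le_real.mpr (sq_nonneg (ν i))).1
  have hEntNN : vNEntropy (N * N) = ∑ i, Real.negMulLog (ν i ^ 2) := by
    rw [hNN, vNEntropy_eq hNNherm]
    exact aux_entropy_diag (fun i => ν i ^ 2) (fun i => sq_nonneg _) hNNherm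
  refine ⟨⟨hPSD, htrace⟩, ?_, ?_⟩
  · rw [vNEntropy_eq hPSD.1, hEntNN]
    exact aux_entropy_le hPSD (fun i => ν i ^ 2) hdiagρ
  · rw [hEntNN, ← Finset.sum_neg_distrib]
    exact Finset.sum_congr rfl fun i _ => by rw [Real.negMulLog]; ring
end
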